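/- Let (X, δ) be a bounded hyperconvex diversity with induced metric space (X, d). Then every nonempty admissible subset A of (X, d) has the fixed point property for nonexpansive self-mappings: every nonexpansive T : A → A (with respect to d) has a fixed point. -/

import Mathlib

set_option maxHeartbeats 2000000


/-- A diversity on `X`: a real-valued function on finite subsets of `X` which is
nonnegative, vanishes exactly on sets of cardinality at most one, and satisfies the
triangle inequality `δ(A ∪ C) ≤ δ(A ∪ B) + δ(B ∪ C)` for nonempty `B`. -/
structure Diversity (X : Type*) [DecidableEq X] where
  delta : Finset X → ℝ
  nonneg : ∀ A, 0 ≤ delta A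
  eq_zero_iff : ∀ A, delta A = 0 ↔ A.card ≤ 1
  triangle : ∀ A B C : Finset X, B.Nonempty →
    delta (A ∪ C) ≤ delta (A ∪ B) + delta (B ∪ C)

namespace Diversity

variable {X : Type*} [DecidableEq X]

/-- A diversity is hyperconvex if for every `r : ⟨X⟩ → ℝ` with `r ∅ = 0` such that
`δ(⋃_{A ∈ 𝒜} A) ≤ ∑_{A ∈ 𝒜} r A` for every finite collection `𝒜` of finite subsets
of `X`, there is `z ∈ X` with `δ({z} ∪ Y) ≤ r Y` for all finite `Y ⊆ X`. -/
def Hyperconvex (D : Diversity X) : Prop :=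
  ∀ r : Finset X → ℝ, r ∅ = 0 →
    (∀ 𝒜 : Finset (Finset X), D.delta (𝒜.sup id) ≤ ∑ A ∈ 𝒜, r A) →
    ∃ z : X, ∀ Y : Finset X, D.delta (insert z Y) ≤ r Y

/-- A diversity is bounded if its values are uniformly bounded above. -/
def Bounded (D : Diversity X) : Prop :=
  ∃ M : ℝ, 0 ≤ M ∧ ∀ A : Finset X, D.delta A ≤ M

end Diversity

namespace Diversity

variable {X : Type*} [DecidableEq X]

/-- The closed ball of center `x` and radius `r` of the metric space induced by a
diversity (`d(x, y) = δ {x, y}`). -/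
def ball (D : Diversity X) (x : X) (r : ℝ) : Set X :=
  {y : X | D.delta {x, y} ≤ r}

/-- A subset of `X` is admissible (with respect to the metric induced by the diversity)
if it is an intersection of closed balls. -/
def IsAdmissible (D : Diversity X) (A : Set X) : Prop :=
  ∃ s : Set (X × ℝ), A = ⋂ p ∈ s, D.ball p.1 p.2

end Diversity

namespace Diversity
variable {X : Type*} [DecidableEq X] (D : Diversity X)

lemma union_single (s : Finset X) (a : X) : s ∪ {a} = insert a s := by
  rw [Finset.union_comm, ← Finset.insert_eq]

lemma delta_empty : D.delta ∅ = 0 := (D.eq_zero_iff ∅).mpr (by simp)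

lemma delta_singleton (x : X) : D.delta {x} = 0 := (D.eq_zero_iff {x}).mpr (by simp)

lemma pair_comm' (x y : X) : D.delta {x, y} = D.delta {y, x} := by rw [Finset.pair_comm]

lemma le_insert (S : Finset X) (x : X) : D.delta S ≤ D.delta (insert x S) := by
  have h := D.triangle S {x} ∅ ⟨x, Finset.mem_singleton_self x⟩
  simpa [union_single, D.delta_singleton] using h

lemma mono {S S' : Finset X} (h : S ⊆ S') : D.delta S ≤ D.delta S' := by
  have key : ∀ G : Finset X, D.delta S ≤ D.delta (S ∪ G) := by
    intro G
    induction G using Finset.induction_on with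
    | empty => simp
    | @insert a G ha IH =>
      calc D.delta S ≤ D.delta (S ∪ G) := IH
      _ ≤ D.delta (insert a (S ∪ G)) := D.le_insert _ _
      _ = D.delta (S ∪ insert a G) := by rw [Finset.union_insert]
  have h2 := key S'
  rwa [Finset.union_eq_right.mpr h] at h2

lemma union_star {F : Finset X} {w : X} (hw : w ∈ F) (G : Finset X) :
    D.delta (F ∪ G) ≤ D.delta F + ∑ x ∈ G, D.delta {w, x} := by
  induction G using Finset.induction_on with
  | empty => simp
  | @insert a G ha IH =>
    have h1 : D.delta ((F ∪ G) ∪ {a}) ≤ D.delta ((F ∪ G) ∪ {w}) + D.delta ({w} ∪ {a}) :=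
      D.triangle (F ∪ G) {w} {a} ⟨w, Finset.mem_singleton_self w⟩
    have h2 : (F ∪ G) ∪ {w} = F ∪ G :=
      Finset.union_eq_left.mpr (Finset.singleton_subset_iff.mpr (Finset.mem_union_left _ hw))
    have h3 : ({w} ∪ {a} : Finset X) = {w, a} := (Finset.insert_eq w {a}).symm
    have h4 : F ∪ insert a G = (F ∪ G) ∪ {a} := by
      rw [union_single, Finset.union_insert]
    rw [h4, Finset.sum_insert ha]
    rw [h2, h3] at h1
    calc D.delta ((F ∪ G) ∪ {a}) ≤ D.delta (F ∪ G) + D.delta {w, a} := h1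
    _ ≤ (D.delta F + ∑ x ∈ G, D.delta {w, x}) + D.delta {w, a} := by linarith
    _ = D.delta F + (D.delta {w, a} + ∑ x ∈ G, D.delta {w, x}) := by ring

lemma insert_star (w : X) (S : Finset X) :
    D.delta (insert w S) ≤ ∑ x ∈ S, D.delta {w, x} := by
  have h := D.union_star (Finset.mem_singleton_self w) S
  simpa [← Finset.insert_eq, D.delta_singleton] using h

lemma star (w : X) (S : Finset X) :
    D.delta S ≤ ∑ x ∈ S, D.delta {w, x} :=
  le_trans (D.mono (Finset.subset_insert w S)) (D.insert_star w S)

lemma chain_bound {s : Set X} {d : ℝ}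
    (hd : ∀ x ∈ s, ∀ y ∈ s, D.delta {x, y} ≤ d) :
    ∀ F : Finset X, ↑F ⊆ s → F.Nonempty → D.delta F ≤ ((F.card : ℝ) - 1) * d := by
  intro F
  induction F using Finset.induction_on with
  | empty => intro _ h; simp at h
  | @insert a F ha IH =>
    intro hsub _
    have hsubF : ↑F ⊆ s := by
      refine subset_trans ?_ hsub
      exact_mod_cast Finset.coe_subset.mpr (Finset.subset_insert a F)
    rcases F.eq_empty_or_nonempty with hF | ⟨w, hw⟩
    · subst hF; simp [D.delta_singleton]
    · have h1 : D.delta (F ∪ {a}) ≤ D.delta (F ∪ {w}) + D.delta ({w} ∪ {a}) :=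
        D.triangle F {w} {a} ⟨w, Finset.mem_singleton_self w⟩
      have h2 : F ∪ {w} = F := Finset.union_eq_left.mpr (Finset.singleton_subset_iff.mpr hw)
      have h3 : ({w} ∪ {a} : Finset X) = {w, a} := (Finset.insert_eq w {a}).symm
      have h4 : insert a F = F ∪ {a} := (union_single F a).symm
      have hwa : D.delta {w, a} ≤ d := hd w (hsubF hw) a (hsub (Finset.mem_insert_self a F))
      have hF' := IH hsubF ⟨w, hw⟩
      have hcard : ((insert a F).card : ℝ) = (F.card : ℝ) + 1 := by
        rw [Finset.card_insert_of_notMem ha]; push_cast; ring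
      have hFpos : (1:ℝ) ≤ (F.card : ℝ) := by
        have := Finset.card_pos.mpr ⟨w, hw⟩; exact_mod_cast this
      rw [h2, h3] at h1
      rw [h4]
      calc D.delta (F ∪ {a}) ≤ D.delta F + D.delta {w, a} := h1
      _ ≤ ((F.card : ℝ) - 1) * d + d := by linarith
      _ = (((F ∪ {a}).card : ℝ) - 1) * d := by rw [← h4, hcard]; ring

lemma sum_image_fst_le (P : Finset (X × ℝ)) (f : X → ℝ) (hf : ∀ x, 0 ≤ f x) :
    ∑ x ∈ P.image Prod.fst, f x ≤ ∑ p ∈ P, f p.1 := by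
  induction P using Finset.induction_on with
  | empty => simp
  | @insert p P hp IH =>
    rw [Finset.image_insert, Finset.sum_insert hp]
    by_cases h : p.1 ∈ P.image Prod.fst
    · rw [Finset.insert_eq_self.mpr h]
      linarith [hf p.1]
    · rw [Finset.sum_insert h]; linarith

private lemma eps_le {a b : ℝ} (h : ∀ ε : ℝ, 0 < ε → a ≤ b + ε) : a ≤ b := by
  by_contra h'
  push_neg at h'
  have := h ((a - b)/2) (by linarith)
  linarith

lemma ballInter (hH : D.Hyperconvex) {M : ℝ} (hM0 : 0 ≤ M) (hM : ∀ A, D.delta A ≤ M)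
    (t : Set (X × ℝ))
    (ht : ∀ P : Finset (X × ℝ), ↑P ⊆ t → D.delta (P.image Prod.fst) ≤ ∑ p ∈ P, p.2) :
    ∃ z : X, ∀ p ∈ t, z ∈ D.ball p.1 p.2 := by
  classical
  have hrad : ∀ p ∈ t, (0:ℝ) ≤ p.2 := by
    rintro ⟨c, s⟩ hp
    have h := ht {(c, s)} (by simpa using hp)
    simpa [D.delta_singleton] using h
  set Rset : X → Set ℝ := fun c => {s | (c, s) ∈ t ∨ s = M} with hRset
  have hRne : ∀ c, (Rset c).Nonempty := fun c => ⟨M, Or.inr rfl⟩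
  have hRbdd : ∀ c, BddBelow (Rset c) := by
    intro c
    refine ⟨0, fun s hs => ?_⟩
    rcases hs with h | h
    · exact hrad (c, s) h
    · rw [h]; exact hM0
  set ri : X → ℝ := fun c => sInf (Rset c) with hri
  have hri_nonneg : ∀ c, 0 ≤ ri c := by
    intro c
    refine le_csInf (hRne c) (fun s hs => ?_)
    rcases hs with h | h
    · exact hrad (c, s) h
    · rw [h]; exact hM0
  have hri_le : ∀ c s, (c, s) ∈ t → ri c ≤ s := fun c s h => csInf_le (hRbdd c) (Or.inl h)
  set r : Finset X → ℝ := fun Y =>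
    if Y = ∅ then 0 else if h : ∃ c, Y = {c} then ri h.choose else M with hr
  have hr0 : r ∅ = 0 := by simp [hr]
  have hrsingle : ∀ c : X, r {c} = ri c := by
    intro c
    have hne : ({c} : Finset X) ≠ ∅ := by simp
    have hex : ∃ c', ({c} : Finset X) = {c'} := ⟨c, rfl⟩
    have hc : hex.choose = c := (Finset.singleton_inj.mp hex.choose_spec).symm
    simp only [hr, if_neg hne, dif_pos hex, hc]
  have hrnn : ∀ Y, 0 ≤ r Y := by
    intro Y
    simp only [hr]
    split
    · exact le_refl 0
    · split
      · exact hri_nonneg _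
      · exact hM0
  have hcond : ∀ 𝒜 : Finset (Finset X), D.delta (𝒜.sup id) ≤ ∑ A ∈ 𝒜, r A := by
    intro 𝒜
    have hsup : (𝒜.erase ∅).sup id = 𝒜.sup id := Finset.sup_erase_bot 𝒜
    have hsum : ∑ A ∈ 𝒜.erase ∅, r A = ∑ A ∈ 𝒜, r A := Finset.sum_erase 𝒜 hr0
    rw [← hsup, ← hsum]
    set 𝒜' := 𝒜.erase ∅ with h𝒜'
    have hne' : ∀ A ∈ 𝒜', A ≠ ∅ := fun A hA => Finset.ne_of_mem_erase hA
    by_cases hall : ∀ A ∈ 𝒜', ∃ c : X, A = {c}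
    · rcases 𝒜'.eq_empty_or_nonempty with hemp | ⟨A1, hA1⟩
      · rw [hemp]; simp [D.delta_empty]
      obtain ⟨c1, hc1⟩ := hall A1 hA1
      set g : Finset X → X := fun A => if h : ∃ c, A = {c} then h.choose else c1 with hgdef
      have hg : ∀ A ∈ 𝒜', A = {g A} := by
        intro A hA
        have h := hall A hA
        simp only [hgdef, dif_pos h]
        exact h.choose_spec
      have hrg : ∀ A ∈ 𝒜', r A = ri (g A) := by
        intro A hA
        have h := hall A hA
        simp only [hr, hgdef, if_neg (hne' A hA), dif_pos h]
      refine eps_le (fun ε hε => ?_)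
      set n := 𝒜'.card with hn
      have hnpos : 0 < n := Finset.card_pos.mpr ⟨A1, hA1⟩
      set ε' : ℝ := ε / (n + 1) with hε'def
      have hε' : 0 < ε' := by positivity
      have hchoice : ∀ A : Finset X, ∃ a ∈ Rset (g A), a < sInf (Rset (g A)) + ε' :=
        fun A => Real.lt_sInf_add_pos (hRne (g A)) hε'
      set σ : Finset X → ℝ := fun A => (hchoice A).choose with hσdef
      have hσ1 : ∀ A, σ A ∈ Rset (g A) := fun A => (hchoice A).choose_spec.1
      have hσ2 : ∀ A, σ A < ri (g A) + ε' := fun A => (hchoice A).choose_spec.2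
      have hnε : (n : ℝ) * ε' ≤ ε := by
        rw [hε'def, div_eq_mul_inv]
        have h2 : (0:ℝ) < (n:ℝ) + 1 := by positivity
        calc (n:ℝ) * (ε * ((n:ℝ)+1)⁻¹) = ε * ((n:ℝ) / ((n:ℝ)+1)) := by ring
        _ ≤ ε * 1 := by
            apply mul_le_mul_of_nonneg_left _ (le_of_lt hε)
            rw [div_le_one h2]; linarith
        _ = ε := by ring
      by_cases hcase : ∀ A ∈ 𝒜', (g A, σ A) ∈ t
      · set P : Finset (X × ℝ) := 𝒜'.image (fun A => (g A, σ A)) with hP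
        have hPt : ↑P ⊆ t := by
          intro p hp
          simp only [hP, Finset.coe_image, Set.mem_image, Finset.mem_coe] at hp
          obtain ⟨Aa, hA, rfl⟩ := hp
          exact hcase Aa hA
        have himg : P.image Prod.fst = 𝒜'.image g := by
          rw [hP, Finset.image_image]
          rfl
        have hsupim : 𝒜'.sup id = 𝒜'.image g := by
          rw [← Finset.sup_singleton_apply 𝒜' g]
          exact Finset.sup_congr rfl (fun A hA => hg A hA)
        have hinj : ∀ x ∈ 𝒜', ∀ y ∈ 𝒜',
            (fun A => (g A, σ A)) x = (fun A => (g A, σ A)) y → x = y := by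
          intro x hx y hy hxy
          have : g x = g y := congrArg Prod.fst hxy
          rw [hg x hx, hg y hy, this]
        have hsumP : ∑ p ∈ P, p.2 = ∑ A ∈ 𝒜', σ A := by
          rw [hP, Finset.sum_image hinj]
        calc D.delta (𝒜'.sup id) = D.delta (P.image Prod.fst) := by rw [himg, hsupim]
        _ ≤ ∑ p ∈ P, p.2 := ht P hPt
        _ = ∑ A ∈ 𝒜', σ A := hsumP
        _ ≤ ∑ A ∈ 𝒜', (r A + ε') := by
            apply Finset.sum_le_sum
            intro A hA
            rw [hrg A hA]
            exact le_of_lt (hσ2 A)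
        _ = (∑ A ∈ 𝒜', r A) + (n : ℝ) * ε' := by
            rw [Finset.sum_add_distrib, Finset.sum_const, nsmul_eq_mul, hn]
        _ ≤ (∑ A ∈ 𝒜', r A) + ε := by linarith
      · push_neg at hcase
        obtain ⟨A0, hA0, hA0n⟩ := hcase
        have hσM : σ A0 = M := by
          rcases hσ1 A0 with h | h
          · exact absurd h hA0n
          · exact h
        have h1 : D.delta (𝒜'.sup id) ≤ M := hM _
        have h2 : M < r A0 + ε' := by
          rw [← hσM, hrg A0 hA0]
          exact hσ2 A0
        have h3 : r A0 ≤ ∑ A ∈ 𝒜', r A := Finset.single_le_sum (fun i _ => hrnn i) hA0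
        have hε'ε : ε' ≤ ε := by
          have hn1 : (1:ℝ) ≤ (n:ℝ) := by exact_mod_cast hnpos
          nlinarith [le_of_lt hε']
        linarith
    · push_neg at hall
      obtain ⟨A0, hA0, hA0n⟩ := hall
      have hrA0 : r A0 = M := by
        simp only [hr, if_neg (hne' A0 hA0), dif_neg (not_exists.mpr hA0n)]
      have h3 : r A0 ≤ ∑ A ∈ 𝒜', r A := Finset.single_le_sum (fun i _ => hrnn i) hA0
      calc D.delta (𝒜'.sup id) ≤ M := hM _
      _ = r A0 := hrA0.symm
      _ ≤ ∑ A ∈ 𝒜', r A := h3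
  obtain ⟨z, hz⟩ := hH r hr0 hcond
  refine ⟨z, fun p hp => ?_⟩
  have h := hz {p.1}
  rw [hrsingle p.1] at h
  have h2 : D.delta {p.1, z} ≤ ri p.1 := by
    have heq : insert z {p.1} = ({z, p.1} : Finset X) := rfl
    rw [heq] at h
    rwa [D.pair_comm']
  exact le_trans h2 (hri_le p.1 p.2 hp)

end Diversity

/-- Let `(X, δ)` be a bounded hyperconvex diversity with induced
metric `d(x,y) = δ {x,y}`. Then every nonempty admissible subset `A` of `(X, d)` has the
fixed point property for nonexpansive self-mappings: every `T : A → A` nonexpansive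
with respect to `d` has a fixed point in `A`. -/
theorem admissible_fixed_point_property
    {X : Type*} [DecidableEq X] (D : Diversity X)
    (hH : D.Hyperconvex) (hB : D.Bounded)
    (A : Set X) (hAne : A.Nonempty) (hAadm : D.IsAdmissible A)
    (T : X → X) (hTA : ∀ x ∈ A, T x ∈ A)
    (hT : ∀ x ∈ A, ∀ y ∈ A, D.delta {T x, T y} ≤ D.delta {x, y}) :
    ∃ x ∈ A, T x = x := by
  classical
  obtain ⟨M, hM0, hM⟩ := hB
  set S : Set (Set X) := {B | B.Nonempty ∧ B ⊆ A ∧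
      (∃ t : Set (X × ℝ), B = ⋂ p ∈ t, D.ball p.1 p.2) ∧ ∀ x ∈ B, T x ∈ B} with hSdef
  have hAS : A ∈ S := ⟨hAne, subset_rfl, hAadm, hTA⟩
  -- Zorn's lemma
  have hchains : ∀ c ⊆ S, IsChain (· ⊆ ·) c → ∃ lb ∈ S, ∀ s ∈ c, lb ⊆ s := by
    intro c hcS hchain
    rcases c.eq_empty_or_nonempty with rfl | hcne
    · exact ⟨A, hAS, by simp⟩
    have hsel : ∀ B : c, ∃ t : Set (X × ℝ), (B : Set X) = ⋂ p ∈ t, D.ball p.1 p.2 :=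
      fun B => (hcS B.2).2.2.1
    choose tf htf using hsel
    set t : Set (X × ℝ) := ⋃ B : c, tf B with htdef
    have hLeq : (⋂₀ c) = ⋂ p ∈ t, D.ball p.1 p.2 := by
      ext x
      simp only [Set.mem_sInter, Set.mem_iInter, htdef, Set.mem_iUnion]
      constructor
      · rintro h p ⟨B, hpB⟩
        have : x ∈ (B : Set X) := h B B.2
        rw [htf B] at this
        simp only [Set.mem_iInter] at this
        exact this p hpB
      · intro h B hB
        have hmem : x ∈ ⋂ p ∈ tf ⟨B, hB⟩, D.ball p.1 p.2 := by
          simp only [Set.mem_iInter]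
          intro p hp
          exact h p ⟨⟨B, hB⟩, hp⟩
        rw [show B = ⋂ p ∈ tf (⟨B, hB⟩ : c), D.ball p.1 p.2 from htf ⟨B, hB⟩]
        exact hmem
    have hcond : ∀ P : Finset (X × ℝ), ↑P ⊆ t → D.delta (P.image Prod.fst) ≤ ∑ p ∈ P, p.2 := by
      have key : ∀ P : Finset (X × ℝ), ↑P ⊆ t → ∃ B₀ : c, ∀ p ∈ P, (B₀ : Set X) ⊆ D.ball p.1 p.2 := by
        intro P
        induction P using Finset.induction_on with
        | empty => exact fun _ => ⟨⟨hcne.choose, hcne.choose_spec⟩, by simp⟩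
        | @insert q Q hq IH =>
          intro hPt
          have hQt : ↑Q ⊆ t := by
            refine subset_trans ?_ hPt
            exact_mod_cast Finset.coe_subset.mpr (Finset.subset_insert q Q)
          obtain ⟨B₀, hB₀⟩ := IH hQt
          have hqt : q ∈ t := hPt (Finset.mem_insert_self q Q)
          rw [htdef] at hqt
          simp only [Set.mem_iUnion] at hqt
          obtain ⟨Bq, hqBq⟩ := hqt
          have hBqball : (Bq : Set X) ⊆ D.ball q.1 q.2 := by
            rw [htf Bq]
            exact Set.biInter_subset_of_mem hqBq
          rcases eq_or_ne B₀ Bq with rfl | hne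
          · refine ⟨B₀, fun p hp => ?_⟩
            rcases Finset.mem_insert.mp hp with rfl | hpQ
            · exact hBqball
            · exact hB₀ p hpQ
          rcases hchain B₀.2 Bq.2 (fun h => hne (Subtype.ext h)) with hle | hle
          · refine ⟨B₀, fun p hp => ?_⟩
            rcases Finset.mem_insert.mp hp with rfl | hpQ
            · exact subset_trans hle hBqball
            · exact hB₀ p hpQ
          · refine ⟨Bq, fun p hp => ?_⟩
            rcases Finset.mem_insert.mp hp with rfl | hpQ
            · exact hBqball
            · exact subset_trans hle (hB₀ p hpQ)
      intro P hPt
      obtain ⟨B₀, hB₀⟩ := key P hPt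
      obtain ⟨w, hw⟩ := (hcS B₀.2).1
      calc D.delta (P.image Prod.fst) ≤ ∑ x ∈ P.image Prod.fst, D.delta {w, x} := D.star w _
      _ ≤ ∑ p ∈ P, D.delta {w, p.1} := Diversity.sum_image_fst_le P _ (fun x => D.nonneg _)
      _ ≤ ∑ p ∈ P, p.2 := by
          refine Finset.sum_le_sum (fun p hp => ?_)
          rw [D.pair_comm']
          exact hB₀ p hp hw
    obtain ⟨z, hz⟩ := D.ballInter hH hM0 hM t hcond
    have hzL : z ∈ ⋂₀ c := by
      rw [hLeq]
      simp only [Set.mem_iInter]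
      exact fun p hp => hz p hp
    refine ⟨⋂₀ c, ⟨⟨z, hzL⟩, ?_, ⟨t, hLeq⟩, ?_⟩, fun s hs => Set.sInter_subset_of_mem hs⟩
    · obtain ⟨B1, hB1⟩ := hcne
      exact subset_trans (Set.sInter_subset_of_mem hB1) (hcS hB1).2.1
    · intro x hx
      rw [Set.mem_sInter] at hx ⊢
      intro B hB
      exact (hcS hB).2.2.2 x (hx B hB)
  obtain ⟨B, hBmin⟩ := zorn_superset S hchains
  have hBS : B ∈ S := hBmin.1
  obtain ⟨hBne, hBA, ⟨tB, htB⟩, hBT⟩ := hBS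
  have hmin : ∀ C ∈ S, C ⊆ B → C = B := fun C hC hCB => subset_antisymm hCB (hBmin.2 hC hCB)
  have hballB : ∀ w ∈ B, ∀ p ∈ tB, w ∈ D.ball p.1 p.2 := by
    intro w hw p hp
    rw [htB] at hw
    simp only [Set.mem_iInter] at hw
    exact hw p hp
  by_cases hzero : ∀ x ∈ B, ∀ y ∈ B, D.delta {x, y} = 0
  · obtain ⟨b, hb⟩ := hBne
    have hTb : T b ∈ B := hBT b hb
    have h0 : D.delta {b, T b} = 0 := hzero b hb (T b) hTb
    have hcard := (D.eq_zero_iff {b, T b}).mp h0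
    have hfix : T b = b := by
      have h2 : T b ∈ ({b, T b} : Finset X) := by simp
      have h1 : b ∈ ({b, T b} : Finset X) := by simp
      exact Finset.card_le_one.mp hcard _ h2 _ h1
    exact ⟨b, hBA hb, hfix⟩
  exfalso
  push_neg at hzero
  obtain ⟨x₀, hx₀, y₀, hy₀, hxy₀⟩ := hzero
  set dset : Set ℝ := {d | ∃ x ∈ B, ∃ y ∈ B, d = D.delta {x, y}} with hdsetdef
  have hdne : dset.Nonempty := ⟨_, x₀, hx₀, y₀, hy₀, rfl⟩
  have hdbdd : BddAbove dset := ⟨M, by rintro d ⟨x, hx, y, hy, rfl⟩; exact hM _⟩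
  set D₀ : ℝ := sSup dset with hD₀def
  have hD₀pos : 0 < D₀ := by
    have h1 : D.delta {x₀, y₀} ≤ D₀ := le_csSup hdbdd ⟨x₀, hx₀, y₀, hy₀, rfl⟩
    have h2 : 0 < D.delta {x₀, y₀} := lt_of_le_of_ne (D.nonneg _) (Ne.symm hxy₀)
    linarith
  have hpair : ∀ x ∈ B, ∀ y ∈ B, D.delta {x, y} ≤ D₀ :=
    fun x hx y hy => le_csSup hdbdd ⟨x, hx, y, hy, rfl⟩
  have hD₀M : D₀ ≤ M := csSup_le hdne (by rintro d ⟨x, hx, y, hy, rfl⟩; exact hM _)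
  set K : ℕ := max 1 ⌈M / D₀⌉₊ with hKdef
  have hK1 : 1 ≤ K := le_max_left _ _
  have hK1' : (1:ℝ) ≤ (K:ℝ) := by exact_mod_cast hK1
  have hKM : M ≤ (K : ℝ) * D₀ := by
    have h1 : M / D₀ ≤ (⌈M / D₀⌉₊ : ℝ) := Nat.le_ceil _
    have h2 : ((⌈M / D₀⌉₊ : ℕ) : ℝ) ≤ (K:ℝ) := by exact_mod_cast le_max_right 1 ⌈M / D₀⌉₊
    have h3 : M / D₀ ≤ (K:ℝ) := le_trans h1 h2
    calc M = (M / D₀) * D₀ := by field_simp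
    _ ≤ (K:ℝ) * D₀ := mul_le_mul_of_nonneg_right h3 (le_of_lt hD₀pos)
  have h2Kpos : (0:ℝ) < 2 * (K:ℝ) := by linarith
  set lam : ℝ := D₀ - D₀ / (2 * (K:ℝ)) with hlamdef
  have hlam_nonneg : 0 ≤ lam := by
    rw [hlamdef]
    have h : D₀ / (2 * (K:ℝ)) ≤ D₀ := by
      rw [div_le_iff₀ h2Kpos]
      nlinarith [hD₀pos, hK1']
    linarith
  have hlam_lt : lam < D₀ := by
    rw [hlamdef]
    have : 0 < D₀ / (2 * (K:ℝ)) := div_pos hD₀pos h2Kpos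
    linarith
  have hFbound : ∀ F : Finset X, ↑F ⊆ B → F.Nonempty → D.delta F ≤ (F.card : ℝ) * lam := by
    intro F hFB hFne
    have hcb := D.chain_bound hpair F hFB hFne
    have hbd := hM F
    have hn1 : (1:ℝ) ≤ (F.card : ℝ) := by
      have := Finset.card_pos.mpr hFne; exact_mod_cast this
    by_cases hcase : (F.card : ℝ) ≤ 2 * (K:ℝ)
    · have key : ((F.card:ℝ) - 1) * D₀ ≤ (F.card:ℝ) * lam := by
        rw [hlamdef]
        have h4 : (F.card:ℝ) * (D₀ / (2 * (K:ℝ))) ≤ D₀ := by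
          have e1 : (0:ℝ) ≤ D₀ / (2 * (K:ℝ)) := le_of_lt (div_pos hD₀pos h2Kpos)
          have e2 : (F.card:ℝ) * (D₀ / (2 * (K:ℝ))) ≤ (2*(K:ℝ)) * (D₀ / (2 * (K:ℝ))) :=
            mul_le_mul_of_nonneg_right hcase e1
          have e3 : (2*(K:ℝ)) * (D₀ / (2 * (K:ℝ))) = D₀ := by
            field_simp
          linarith
        calc ((F.card:ℝ) - 1) * D₀ = (F.card:ℝ) * D₀ - D₀ := by ring
        _ ≤ (F.card:ℝ) * D₀ - (F.card:ℝ) * (D₀ / (2 * (K:ℝ))) := by linarith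
        _ = (F.card:ℝ) * (D₀ - D₀ / (2 * (K:ℝ))) := by ring
      linarith
    · push_neg at hcase
      have key : M ≤ (F.card:ℝ) * lam := by
        have hlam2 : (2*(K:ℝ)) * lam = 2*(K:ℝ)*D₀ - D₀ := by
          have e3 : (2*(K:ℝ)) * (D₀ / (2 * (K:ℝ))) = D₀ := by
            field_simp
          rw [hlamdef, mul_sub, e3]
        have h5 : (2*(K:ℝ)) * lam ≤ (F.card:ℝ) * lam :=
          mul_le_mul_of_nonneg_right (le_of_lt hcase) hlam_nonneg
        have h6 : M ≤ (2*(K:ℝ)) * lam := by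
          rw [hlam2]
          nlinarith [hKM, hD₀M, hD₀pos, hK1', mul_nonneg (sub_nonneg.mpr hK1') (le_of_lt hD₀pos)]
        linarith
      linarith
  -- covering lemma
  have hcov : ∀ q : X × ℝ, (∀ x ∈ B, T x ∈ D.ball q.1 q.2) → B ⊆ D.ball q.1 q.2 := by
    intro q hq
    set tc : Set (X × ℝ) := {q' | ∀ x ∈ B, T x ∈ D.ball q'.1 q'.2} with htcdef
    set B' : Set X := ⋂ p ∈ (tB ∪ tc), D.ball p.1 p.2 with hB'def
    have hB'B : B' ⊆ B := by
      rw [htB]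
      intro x hx
      simp only [hB'def, Set.mem_iInter] at hx ⊢
      exact fun p hp => hx p (Or.inl hp)
    have hB'S : B' ∈ S := by
      refine ⟨?_, subset_trans hB'B hBA, ⟨tB ∪ tc, rfl⟩, ?_⟩
      · obtain ⟨b, hb⟩ := hBne
        refine ⟨T b, ?_⟩
        simp only [hB'def, Set.mem_iInter]
        rintro p (hp | hp)
        · exact hballB _ (hBT b hb) p hp
        · exact hp b hb
      · intro x hx
        have hxB : x ∈ B := hB'B hx
        simp only [hB'def, Set.mem_iInter]
        rintro p (hp | hp)
        · exact hballB _ (hBT x hxB) p hp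
        · exact hp x hxB
    have hBeq : B' = B := hmin B' hB'S hB'B
    intro x hx
    have hx' : x ∈ B' := by rw [hBeq]; exact hx
    simp only [hB'def, Set.mem_iInter] at hx'
    exact hx' q (Or.inr hq)
  -- the shrunk admissible set
  set t2 : Set (X × ℝ) := tB ∪ {p : X × ℝ | p.1 ∈ B ∧ p.2 = lam} with ht2def
  have hcond2 : ∀ P : Finset (X × ℝ), ↑P ⊆ t2 → D.delta (P.image Prod.fst) ≤ ∑ p ∈ P, p.2 := by
    intro P hPt
    set P₂ : Finset (X × ℝ) := P.filter (fun p => p.1 ∈ B ∧ p.2 = lam) with hP₂def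
    set P₁ : Finset (X × ℝ) := P \ P₂ with hP₁def
    have hP₂P : P₂ ⊆ P := Finset.filter_subset _ _
    have hP₁tB : ↑P₁ ⊆ tB := by
      intro p hp
      rw [hP₁def] at hp
      simp only [Finset.coe_sdiff, Set.mem_diff, Finset.mem_coe] at hp
      obtain ⟨hpP, hpP₂⟩ := hp
      rcases hPt hpP with h | h
      · exact h
      · exact absurd (Finset.mem_filter.mpr ⟨hpP, h⟩) hpP₂
    have hsum12 : ∑ p ∈ P₁, p.2 + ∑ p ∈ P₂, p.2 = ∑ p ∈ P, p.2 := Finset.sum_sdiff hP₂P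
    rcases P₂.eq_empty_or_nonempty with hP₂e | hP₂ne
    · have hP1P : P₁ = P := by rw [hP₁def, hP₂e, Finset.sdiff_empty]
      obtain ⟨w, hw⟩ := hBne
      calc D.delta (P.image Prod.fst) ≤ ∑ x ∈ P.image Prod.fst, D.delta {w, x} := D.star w _
      _ ≤ ∑ p ∈ P, D.delta {w, p.1} := Diversity.sum_image_fst_le P _ (fun x => D.nonneg _)
      _ ≤ ∑ p ∈ P, p.2 := by
          refine Finset.sum_le_sum (fun p hp => ?_)
          rw [D.pair_comm']
          have : p ∈ P₁ := by rw [hP1P]; exact hp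
          exact hballB w hw p (hP₁tB this)
    · set F : Finset X := P₂.image Prod.fst with hFdef
      have hFne : F.Nonempty := hP₂ne.image _
      obtain ⟨w, hwF⟩ := hFne
      have hFB : ↑F ⊆ B := by
        intro x hx
        rw [hFdef] at hx
        simp only [Finset.coe_image, Set.mem_image, Finset.mem_coe] at hx
        obtain ⟨p, hp, rfl⟩ := hx
        exact (Finset.mem_filter.mp hp).2.1
      have hwB : w ∈ B := hFB hwF
      have himg : P.image Prod.fst = F ∪ P₁.image Prod.fst := by
        have hPu : P₂ ∪ P₁ = P := by
          rw [hP₁def, Finset.union_sdiff_of_subset hP₂P]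
        rw [← hPu, Finset.image_union, hFdef]
      have h1 : D.delta (F ∪ P₁.image Prod.fst) ≤ D.delta F + ∑ x ∈ P₁.image Prod.fst, D.delta {w, x} :=
        D.union_star hwF _
      have h2 : D.delta F ≤ (F.card : ℝ) * lam := hFbound F hFB ⟨w, hwF⟩
      have h3 : (F.card : ℝ) * lam ≤ (P₂.card : ℝ) * lam := by
        apply mul_le_mul_of_nonneg_right _ hlam_nonneg
        exact_mod_cast Finset.card_image_le
      have h4 : ∑ p ∈ P₂, p.2 = (P₂.card : ℝ) * lam := by
        rw [Finset.sum_congr rfl (fun p hp => (Finset.mem_filter.mp hp).2.2),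
          Finset.sum_const, nsmul_eq_mul]
      have h5 : ∑ x ∈ P₁.image Prod.fst, D.delta {w, x} ≤ ∑ p ∈ P₁, p.2 := by
        calc ∑ x ∈ P₁.image Prod.fst, D.delta {w, x} ≤ ∑ p ∈ P₁, D.delta {w, p.1} :=
            Diversity.sum_image_fst_le P₁ _ (fun x => D.nonneg _)
        _ ≤ ∑ p ∈ P₁, p.2 := by
            refine Finset.sum_le_sum (fun p hp => ?_)
            rw [D.pair_comm']
            exact hballB w hwB p (hP₁tB hp)
      rw [himg]
      calc D.delta (F ∪ P₁.image Prod.fst)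
          ≤ D.delta F + ∑ x ∈ P₁.image Prod.fst, D.delta {w, x} := h1
      _ ≤ (P₂.card : ℝ) * lam + ∑ p ∈ P₁, p.2 := by linarith
      _ = ∑ p ∈ P₂, p.2 + ∑ p ∈ P₁, p.2 := by rw [h4]
      _ = ∑ p ∈ P, p.2 := by rw [add_comm]; exact hsum12
  obtain ⟨z, hz⟩ := D.ballInter hH hM0 hM t2 hcond2
  set C : Set X := ⋂ p ∈ t2, D.ball p.1 p.2 with hCdef
  have hmemC : ∀ y : X, y ∈ C ↔ (∀ p ∈ t2, y ∈ D.ball p.1 p.2) := by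
    intro y
    simp only [hCdef, Set.mem_iInter]
  have hCB : C ⊆ B := by
    rw [htB]
    intro x hx
    rw [hmemC] at hx
    simp only [Set.mem_iInter]
    exact fun p hp => hx p (Or.inl hp)
  have hCball : ∀ y ∈ C, ∀ x ∈ B, D.delta {x, y} ≤ lam := by
    intro y hy x hx
    rw [hmemC] at hy
    have := hy (x, lam) (Or.inr ⟨hx, rfl⟩)
    exact this
  have hCS : C ∈ S := by
    refine ⟨⟨z, (hmemC z).mpr hz⟩, subset_trans hCB hBA, ⟨t2, rfl⟩, ?_⟩
    intro y hy
    have hyB : y ∈ B := hCB hy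
    have hTy : T y ∈ B := hBT y hyB
    have hq : ∀ x ∈ B, T x ∈ D.ball (T y) lam := by
      intro x hx
      have h1 : D.delta {T y, T x} ≤ D.delta {y, x} := hT y (hBA hyB) x (hBA hx)
      have h2 : D.delta {x, y} ≤ lam := hCball y hy x hx
      rw [D.pair_comm'] at h2
      exact le_trans h1 h2
    have hcovTy : B ⊆ D.ball (T y) lam := hcov (T y, lam) hq
    rw [hmemC]
    rintro p (hp | hp)
    · exact hballB _ hTy p hp
    · obtain ⟨hp1, hp2⟩ := hp
      have : p.1 ∈ D.ball (T y) lam := hcovTy hp1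
      have h3 : D.delta {p.1, T y} ≤ lam := by rwa [D.pair_comm']
      show D.delta {p.1, T y} ≤ p.2
      rw [hp2]
      exact h3
  have hCeq : C = B := hmin C hCS hCB
  have hD₀lam : D₀ ≤ lam := by
    apply csSup_le hdne
    rintro d ⟨x, hx, y, hy, rfl⟩
    have hyC : y ∈ C := by rw [hCeq]; exact hy
    exact hCball y hyC x hx
  linarith
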